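/- There exist two cascades (X,f) and (Y,g), each defined on a complete metric space (a closed subset of ℝ), such that neither (X,f) nor (Y,g) is syndetically sensitive, but the product cascade (X×Y, f×g) is cofinitely sensitive. -/

import Mathlib

/-- `A ⊆ ℕ` is syndetic: bounded gaps. -/
def IsSyndetic (A : Set ℕ) : Prop := ∃ N : ℕ, ∀ t : ℕ, ∃ k < N, t + k ∈ A

/-- `A ⊆ ℕ` is thick: contains arbitrarily long runs of consecutive integers. -/
def IsThick (A : Set ℕ) : Prop := ∀ n : ℕ, ∃ t : ℕ, ∀ k ≤ n, t + k ∈ A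

/-- `N(A, ε) = {n : diam (fⁿ(A)) > ε}` for a cascade `f`. -/
def sensTimes {X : Type*} [PseudoMetricSpace X] (f : X → X) (A : Set X) (ε : ℝ) : Set ℕ :=
  {n : ℕ | ENNReal.ofReal ε < EMetric.diam (f^[n] '' A)}

/-- Sensitivity of a cascade. -/
def Sensitive {X : Type*} [PseudoMetricSpace X] (f : X → X) : Prop :=
  ∃ ε > (0 : ℝ), ∀ U : Set X, IsOpen U → U.Nonempty → (sensTimes f U ε).Nonempty

/-- Syndetic sensitivity of a cascade. -/
def SyndeticallySensitive {X : Type*} [PseudoMetricSpace X] (f : X → X) : Prop :=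
  ∃ ε > (0 : ℝ), ∀ U : Set X, IsOpen U → U.Nonempty → IsSyndetic (sensTimes f U ε)

/-- Thick sensitivity of a cascade. -/
def ThicklySensitive {X : Type*} [PseudoMetricSpace X] (f : X → X) : Prop :=
  ∃ ε > (0 : ℝ), ∀ U : Set X, IsOpen U → U.Nonempty → IsThick (sensTimes f U ε)

/-- Cofinite sensitivity of a cascade. -/
def CofinitelySensitive {X : Type*} [PseudoMetricSpace X] (f : X → X) : Prop :=
  ∃ ε > (0 : ℝ), ∀ U : Set X, IsOpen U → U.Nonempty → (sensTimes f U ε)ᶜ.Finite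

open Set

noncomputable def T (x : ℝ) : ℝ := min (2*x) (2 - 2*x)

lemma T_mem {x : ℝ} (h : x ∈ Icc (0:ℝ) 1) : T x ∈ Icc (0:ℝ) 1 := by
  obtain ⟨h0, h1⟩ := h
  rcases le_or_gt x (1/2) with h | h
  · rw [T, min_eq_left (by linarith)]; constructor <;> linarith
  · rw [T, min_eq_right (by linarith)]; constructor <;> linarith

lemma T_image_left {a b : ℝ} (hab : a ≤ b) (hb : b ≤ 1/2) :
    T '' Icc a b = Icc (2*a) (2*b) := by
  have : EqOn T (fun x => 2*x) (Icc a b) := by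
    intro x hx
    have : x ≤ 1/2 := hx.2.trans hb
    simp only [T]
    rw [min_eq_left (by linarith : 2*x ≤ 2 - 2*x)]
  rw [image_congr this]
  ext y
  simp only [mem_image, mem_Icc]
  constructor
  · rintro ⟨x, hx, rfl⟩; exact ⟨by linarith [hx.1], by linarith [hx.2]⟩
  · rintro ⟨h1, h2⟩; exact ⟨y/2, ⟨by linarith, by linarith⟩, by ring⟩

lemma T_image_right {a b : ℝ} (ha : 1/2 ≤ a) (hab : a ≤ b) :
    T '' Icc a b = Icc (2 - 2*b) (2 - 2*a) := by
  have : EqOn T (fun x => 2 - 2*x) (Icc a b) := by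
    intro x hx
    have : 1/2 ≤ x := ha.trans hx.1
    simp only [T]
    rw [min_eq_right (by linarith : 2 - 2*x ≤ 2*x)]
  rw [image_congr this]
  ext y
  simp only [mem_image, mem_Icc]
  constructor
  · rintro ⟨x, hx, rfl⟩; exact ⟨by linarith [hx.2], by linarith [hx.1]⟩
  · rintro ⟨h1, h2⟩; exact ⟨(2-y)/2, ⟨by linarith, by linarith⟩, by ring⟩

lemma T_iter_dyadic : ∀ n (k : ℕ), k < 2^n →
    T^[n] '' Icc ((k:ℝ)/2^n) ((k+1)/2^n) = Icc 0 1 := by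
  intro n
  induction n with
  | zero => intro k hk; interval_cases k; norm_num
  | succ n ih =>
    intro k hk
    rw [Function.iterate_succ, Set.image_comp]
    have h2n : (0:ℝ) < 2^n := by positivity
    rcases lt_or_ge k (2^n) with hkl | hkr
    · have himg : T '' Icc ((k:ℝ)/2^(n+1)) ((k+1)/2^(n+1)) = Icc ((k:ℝ)/2^n) ((k+1)/2^n) := by
        rw [T_image_left (by gcongr; linarith) ?hb]
        · congr 1 <;> · field_simp; ring
        case hb =>
          rw [div_le_div_iff₀ (by positivity) (by norm_num)]
          have : (k:ℝ) + 1 ≤ 2^n := by exact_mod_cast hkl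
          have : ((k:ℝ)+1) * 2 ≤ 2^n * 2 := by linarith
          calc ((k:ℝ)+1) * 2 ≤ 2^n * 2 := this
          _ ≤ 1 * 2^(n+1) := by rw [pow_succ]; ring_nf; exact le_rfl
      rw [himg]; exact ih k hkl
    · have hk1 : (k:ℝ) ≥ 2^n := by exact_mod_cast hkr
      have hku : (k:ℝ) + 1 ≤ 2^(n+1) := by exact_mod_cast hk
      have himg : T '' Icc ((k:ℝ)/2^(n+1)) ((k+1)/2^(n+1))
          = Icc (((2^(n+1) - (k+1) : ℕ):ℝ)/2^n) ((((2^(n+1) - (k+1) : ℕ):ℝ)+1)/2^n) := by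
        rw [T_image_right ?ha (by gcongr; linarith)]
        · have hc : (((2^(n+1) - (k+1) : ℕ)):ℝ) = 2^(n+1) - (k+1) := by
            have : k + 1 ≤ 2^(n+1) := hk
            push_cast [Nat.cast_sub this]
            ring
          rw [hc]
          congr 1 <;> · field_simp; ring
        case ha =>
          rw [le_div_iff₀ (by positivity)]
          calc (1:ℝ)/2 * 2^(n+1) = 2^n := by ring
          _ ≤ k := hk1
      rw [himg]
      apply ih
      omega

lemma T_image_unit : T '' Icc (0:ℝ) 1 = Icc 0 1 := by
  apply Subset.antisymm
  · rintro y ⟨x, hx, rfl⟩; exact T_mem hx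
  · have := T_image_left (a := 0) (b := 1/2) (by norm_num) le_rfl
    rw [show (2:ℝ)*0 = 0 by ring, show (2:ℝ)*(1/2) = 1 by ring] at this
    intro y hy
    rw [← this] at hy
    exact image_mono (Icc_subset_Icc le_rfl (by norm_num)) hy

lemma T_iter_unit (n : ℕ) : T^[n] '' Icc (0:ℝ) 1 = Icc 0 1 := by
  induction n with
  | zero => simp
  | succ n ih => rw [Function.iterate_succ, Set.image_comp, T_image_unit, ih]

/-- every nondegenerate subinterval of [0,1] eventually covers [0,1] under T, forever. -/
lemma T_eventually_covers {a b : ℝ} (h0 : 0 ≤ a) (hab : a < b) (hb : b ≤ 1) :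
    ∃ N, ∀ n ≥ N, T^[n] '' Icc a b = Icc 0 1 := by
  obtain ⟨N, hN⟩ := pow_unbounded_of_one_lt (2/(b-a)) (by norm_num : (1:ℝ) < 2)
  refine ⟨N, fun n hn => ?_⟩
  have h2n : (0:ℝ) < 2^n := by positivity
  have hbig : 2/(b-a) < 2^n := lt_of_lt_of_le hN (by gcongr <;> norm_num)
  have hsub : (2:ℝ) ≤ (b-a) * 2^n := by
    rw [div_lt_iff₀ (by linarith)] at hbig
    nlinarith
  set k : ℕ := ⌈a * 2^n⌉₊ with hk
  have hka : a * 2^n ≤ k := Nat.le_ceil _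
  have hk2 : (k:ℝ) ≤ a * 2^n + 1 := (Nat.ceil_lt_add_one (by positivity)).le
  have hik : (k:ℝ)/2^n ≥ a := by rw [ge_iff_le, le_div_iff₀ (by positivity)]; exact hka
  have hik2 : ((k:ℝ)+1)/2^n ≤ b := by
    rw [div_le_iff₀ (by positivity)]
    nlinarith
  have hklt : k < 2^n := by
    have : ((k:ℝ)+1) ≤ 2^n := by
      have : ((k:ℝ)+1)/2^n ≤ 1 := hik2.trans hb
      rw [div_le_one (by positivity)] at this; exact this
    have : (k:ℝ) < 2^n := by linarith
    exact_mod_cast this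
  apply Subset.antisymm
  · rw [← T_iter_unit n]
    exact image_mono (Icc_subset_Icc h0 hb)
  · rw [← T_iter_dyadic n k hklt]
    exact image_mono (Icc_subset_Icc hik hik2)

lemma T_mem' {t : ℝ} (ht : t ∈ Set.Icc (0:ℝ) 1) : T t ∈ Set.Icc (0:ℝ) 1 := T_mem ht

lemma T_iter_mem {t : ℝ} (ht : t ∈ Icc (0:ℝ) 1) (n : ℕ) : T^[n] t ∈ Icc (0:ℝ) 1 := by
  induction n with
  | zero => simpa
  | succ n ih => rw [Function.iterate_succ_apply']; exact T_mem' ih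

section Cascade
variable (l : ℕ → ℝ)

def piece (m : ℕ) : Set ℝ := Icc (3*m) (3*m + l m)

def Xset : Set ℝ := ⋃ m, piece l m

def aff (m : ℕ) (t : ℝ) : ℝ := 3*m + l m * t

noncomputable def F (x : ℝ) : ℝ := aff l (⌊x/3⌋₊+1) (T ((x - 3*⌊x/3⌋₊)/l ⌊x/3⌋₊))

variable (hpos : ∀ n, 0 < l n) (hle : ∀ n, l n ≤ 1)
include hpos hle

lemma piece_floor {x : ℝ} {m : ℕ} (hx : x ∈ piece l m) : ⌊x/3⌋₊ = m := by
  obtain ⟨h1, h2⟩ := hx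
  have h3 : x ≤ 3*m + 1 := by have := hle m; linarith
  have h4 : (0:ℝ) ≤ 3*m := by positivity
  rw [Nat.floor_eq_iff (by linarith [div_nonneg (by linarith : (0:ℝ) ≤ x) (by norm_num : (0:ℝ) ≤ 3)])]
  constructor
  · rw [le_div_iff₀ (by norm_num)]; linarith
  · rw [div_lt_iff₀ (by norm_num)]; push_cast; linarith

lemma aff_mem_piece {m : ℕ} {t : ℝ} (ht : t ∈ Icc (0:ℝ) 1) : aff l m t ∈ piece l m := by
  have h := hpos m
  constructor
  · simp only [aff]; nlinarith [ht.1]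
  · simp only [aff]; nlinarith [ht.2]

lemma F_aff {m : ℕ} {t : ℝ} (ht : t ∈ Icc (0:ℝ) 1) :
    F l (aff l m t) = aff l (m+1) (T t) := by
  have hmem := aff_mem_piece l hpos hle (m := m) ht
  rw [F, piece_floor l hpos hle hmem]
  congr 2
  simp only [aff]
  rw [add_sub_cancel_left, mul_div_cancel_left₀ _ (ne_of_gt (hpos m))]

omit hle in
lemma aff_image {m : ℕ} {a b : ℝ} (hab : a ≤ b) :
    aff l m '' Icc a b = Icc (aff l m a) (aff l m b) := by
  have hm := hpos m
  ext y
  simp only [mem_image, mem_Icc, aff]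
  constructor
  · rintro ⟨t, ⟨ht1, ht2⟩, rfl⟩
    constructor <;> nlinarith
  · rintro ⟨h1, h2⟩
    refine ⟨(y - 3*m)/l m, ⟨?_, ?_⟩, by field_simp; ring⟩
    · rw [le_div_iff₀ hm]; linarith
    · rw [div_le_iff₀ hm]; linarith

lemma F_iter_image : ∀ n (m : ℕ) (s : Set ℝ), s ⊆ Icc 0 1 →
    (F l)^[n] '' (aff l m '' s) = aff l (m+n) '' (T^[n] '' s) := by
  intro n
  induction n with
  | zero => intro m s _; simp
  | succ n ih =>
    intro m s hs
    rw [Function.iterate_succ, Set.image_comp]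
    have h1 : F l '' (aff l m '' s) = aff l (m+1) '' (T '' s) := by
      rw [← Set.image_comp, ← Set.image_comp]
      exact image_congr (fun t ht => F_aff l hpos hle (hs ht))
    have hTs : T '' s ⊆ Icc 0 1 := by rintro y ⟨t, ht, rfl⟩; exact T_mem' (hs ht)
    rw [h1, ih (m+1) (T '' s) hTs, Function.iterate_succ, Set.image_comp,
      show m+1+n = m+(n+1) by omega]

omit hpos in
lemma piece_subset_unit {m : ℕ} : piece l m ⊆ Icc (3*m) (3*m+1) := by
  apply Icc_subset_Icc le_rfl
  have := hle m; linarith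

omit hpos hle in
lemma piece_mem_aff {x : ℝ} {m : ℕ} (hx : x ∈ piece l m) (hm : 0 < l m) :
    ∃ t ∈ Icc (0:ℝ) 1, x = aff l m t := by
  refine ⟨(x - 3*m)/l m, ⟨?_, ?_⟩, by simp only [aff]; field_simp; ring⟩
  · apply div_nonneg _ hm.le; linarith [hx.1]
  · rw [div_le_one hm]; linarith [hx.2]

lemma F_maps {x : ℝ} {m : ℕ} (hx : x ∈ piece l m) : F l x ∈ piece l (m+1) := by
  obtain ⟨t, ht, rfl⟩ := piece_mem_aff l hx (hpos m)
  rw [F_aff l hpos hle ht]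
  exact aff_mem_piece l hpos hle (T_mem' ht)

lemma F_maps_X {x : ℝ} (hx : x ∈ Xset l) : F l x ∈ Xset l := by
  obtain ⟨_, ⟨m, rfl⟩, hm⟩ := hx
  exact mem_iUnion.2 ⟨m+1, F_maps l hpos hle hm⟩

omit hpos hle in
lemma Xset_closed (hle : ∀ n, l n ≤ 1) : IsClosed (Xset l) := by
  apply LocallyFinite.isClosed_iUnion
  · intro x
    refine ⟨Metric.ball x 1, Metric.ball_mem_nhds x one_pos, ?_⟩
    apply Set.Finite.subset (Set.finite_Iic ⌊|x|+1⌋₊)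
    intro m hm
    obtain ⟨y, hy1, hy2⟩ := hm
    have h1 : (3*m:ℝ) ≤ y := hy1.1
    have h2 : |y - x| < 1 := by simpa [Real.dist_eq] using hy2
    have : (m:ℝ) ≤ |x| + 1 := by
      have := abs_lt.1 h2
      have := neg_abs_le x
      have : (3*m:ℝ) ≤ |x| + 1 := by linarith [abs_lt.1 h2, neg_abs_le x, le_abs_self x]
      linarith [this, (by positivity : (0:ℝ) ≤ (m:ℝ))]
    exact Nat.le_floor this
  · intro m; exact isClosed_Icc

omit hpos hle in
/-- separation of pieces -/
lemma piece_sep (hle : ∀ n, l n ≤ 1) {x y : ℝ} {m m' : ℕ} (hx : x ∈ piece l m)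
    (hy : y ∈ piece l m') (hne : m ≠ m') : 2 ≤ |x - y| := by
  have hx1 : (3*m:ℝ) ≤ x := hx.1
  have hx2 : x ≤ 3*m + 1 := by have := hle m; linarith [hx.2]
  have hy1 : (3*m':ℝ) ≤ y := hy.1
  have hy2 : y ≤ 3*m' + 1 := by have := hle m'; linarith [hy.2]
  rcases lt_or_gt_of_ne hne with h | h
  · have : (m:ℝ) + 1 ≤ m' := by exact_mod_cast h
    rw [abs_sub_comm, abs_of_nonneg (by linarith)]; linarith
  · have : (m':ℝ) + 1 ≤ m := by exact_mod_cast h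
    rw [abs_of_nonneg (by linarith)]; linarith

noncomputable def fmap (hpos : ∀ n, 0 < l n) (hle : ∀ n, l n ≤ 1) : Xset l → Xset l :=
  fun x => ⟨F l x, F_maps_X l hpos hle x.2⟩

lemma fmap_iter_val (n : ℕ) (x : Xset l) :
    (((fmap l hpos hle)^[n] x : Xset l) : ℝ) = (F l)^[n] (x : ℝ) := by
  induction n with
  | zero => simp
  | succ n ih => rw [Function.iterate_succ_apply', Function.iterate_succ_apply', ← ih]; rfl

lemma fmap_continuous : Continuous (fmap l hpos hle) := by
  rw [continuous_induced_rng]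
  show Continuous fun x : Xset l => F l (x : ℝ)
  rw [continuous_iff_continuousAt]
  intro ⟨x, hx⟩
  obtain ⟨_, ⟨m, rfl⟩, hm⟩ := hx
  -- on the neighborhood {z | |z - x| < 1} ∩ Xset, points lie in piece m
  have hnb : ∀ z : Xset l, |(z:ℝ) - x| < 1 → (z:ℝ) ∈ piece l m := by
    intro z hz
    obtain ⟨_, ⟨m', rfl⟩, hm'⟩ := z.2
    by_contra hne
    have : m' ≠ m := fun h => hne (h ▸ hm')
    linarith [piece_sep l hle hm' hm this]
  have hev : (fun z : Xset l => F l (z : ℝ)) =ᶠ[nhds ⟨x, mem_iUnion.2 ⟨m, hm⟩⟩]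
      (fun z : Xset l => aff l (m+1) (T (((z:ℝ) - 3*m)/l m))) := by
    have hopen : IsOpen {z : Xset l | |(z:ℝ) - x| < 1} := by
      have : Continuous fun z : Xset l => |(z:ℝ) - x| := by continuity
      exact isOpen_lt this continuous_const
    apply Filter.eventuallyEq_of_mem (hopen.mem_nhds (by simp))
    intro z hz
    have hzp := hnb z hz
    show F l (z:ℝ) = _
    rw [F, piece_floor l hpos hle hzp]
  apply ContinuousAt.congr _ hev.symm
  apply Continuous.continuousAt
  simp only [aff, T]
  continuity



lemma val_image_iter (U : Set (Xset l)) (n : ℕ) :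
    Subtype.val '' ((fmap l hpos hle)^[n] '' U) = (F l)^[n] '' (Subtype.val '' U) := by
  rw [Set.image_image, Set.image_image]
  exact image_congr (fun x _ => fmap_iter_val l hpos hle n x)

lemma piece_eq_affIcc (m : ℕ) : piece l m = aff l m '' Icc 0 1 := by
  rw [aff_image l hpos (by norm_num : (0:ℝ) ≤ 1)]
  simp only [aff, mul_zero, add_zero, mul_one, piece]

lemma F_iter_piece (m n : ℕ) : (F l)^[n] '' piece l m = piece l (m+n) := by
  rw [piece_eq_affIcc l hpos hle, F_iter_image l hpos hle n m (Icc 0 1) le_rfl, T_iter_unit,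
    ← piece_eq_affIcc l hpos hle]

omit hpos hle in
lemma diam_subtype (s : Set (Xset l)) : EMetric.diam s = EMetric.diam (Subtype.val '' s) :=
  (isometry_subtype_coe.ediam_image s).symm

omit hpos hle in
lemma diam_piece (m : ℕ) : EMetric.diam (piece l m) = ENNReal.ofReal (l m) := by
  rw [piece, EMetric.diam, Real.ediam_Icc]; ring_nf

lemma sens_upper_notMem {U : Set (Xset l)} {m : ℕ} (hU : Subtype.val '' U ⊆ piece l m)
    {n : ℕ} {ε : ℝ} (hε : l (m+n) ≤ ε) : n ∉ sensTimes (fmap l hpos hle) U ε := by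
  simp only [sensTimes, mem_setOf_eq, not_lt]
  rw [diam_subtype l, val_image_iter l hpos hle]
  calc EMetric.diam ((F l)^[n] '' (Subtype.val '' U))
      ≤ EMetric.diam (piece l (m+n)) := by
        apply EMetric.diam_mono
        rw [← F_iter_piece l hpos hle m n]
        exact image_mono hU
    _ = ENNReal.ofReal (l (m+n)) := diam_piece l (m+n)
    _ ≤ ENNReal.ofReal ε := ENNReal.ofReal_le_ofReal hε

lemma eventual_cover {U : Set (Xset l)} (hO : IsOpen U) (hne : U.Nonempty) :
    ∃ m N : ℕ, ∀ n ≥ N, piece l (m+n) ⊆ (F l)^[n] '' (Subtype.val '' U) := by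
  obtain ⟨⟨x, hxX⟩, hxU⟩ := hne
  obtain ⟨O, hOo, rfl⟩ := isOpen_induced_iff.1 hO
  obtain ⟨_, ⟨m, rfl⟩, hm⟩ := hxX
  have hxO : x ∈ O := hxU
  obtain ⟨δ, hδ, hball⟩ := Metric.isOpen_iff.1 hOo x hxO
  set c := max (3*(m:ℝ)) (x - δ/2) with hc
  set d := min (3*(m:ℝ) + l m) (x + δ/2) with hd
  have hcd : c < d := by
    apply max_lt_iff.2
    constructor
    · apply lt_min (by have := hpos m; linarith) (by linarith [hm.1])
    · apply lt_min (by linarith [hm.2]) (by linarith)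
  have hsubP : Icc c d ⊆ piece l m :=
    Icc_subset_Icc (le_max_left _ _) (min_le_left _ _)
  have hsubO : Icc c d ⊆ O := by
    intro y hy
    apply hball
    rw [Metric.mem_ball, Real.dist_eq, abs_sub_lt_iff]
    constructor
    · have := hy.2; have : y ≤ x + δ/2 := le_trans this (min_le_right _ _); linarith
    · have : x - δ/2 ≤ y := le_trans (le_max_right _ _) hy.1; linarith
  have hsubU : Icc c d ⊆ Subtype.val '' (Subtype.val ⁻¹' O : Set (Xset l)) := by
    intro y hy
    exact ⟨⟨y, mem_iUnion.2 ⟨m, hsubP hy⟩⟩, hsubO hy, rfl⟩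
  set a := (c - 3*(m:ℝ))/l m with ha
  set b := (d - 3*(m:ℝ))/l m with hb
  have h0a : 0 ≤ a := div_nonneg (by linarith [le_max_left (3*(m:ℝ)) (x - δ/2)]) (hpos m).le
  have hab : a < b := by
    rw [ha, hb]
    apply div_lt_div_of_pos_right _ (hpos m)
    linarith
  have hb1 : b ≤ 1 := by
    rw [hb, div_le_one (hpos m)]
    have := min_le_left (3*(m:ℝ) + l m) (x + δ/2)
    linarith
  have hlne : l m ≠ 0 := (hpos m).ne'
  have e1 : aff l m a = c := by simp only [aff, ha]; field_simp; ring
  have e2 : aff l m b = d := by simp only [aff, hb]; field_simp; ring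
  have haff : aff l m '' Icc a b = Icc c d := by
    rw [aff_image l hpos hab.le, e1, e2]
  obtain ⟨N, hN⟩ := T_eventually_covers h0a hab hb1
  refine ⟨m, N, fun n hn => ?_⟩
  calc piece l (m+n) = aff l (m+n) '' Icc 0 1 := piece_eq_affIcc l hpos hle (m+n)
    _ = aff l (m+n) '' (T^[n] '' Icc a b) := by rw [hN n hn]
    _ = (F l)^[n] '' (aff l m '' Icc a b) := (F_iter_image l hpos hle n m _
        (Icc_subset_Icc h0a hb1)).symm
    _ = (F l)^[n] '' (Icc c d) := by rw [haff]
    _ ⊆ _ := image_mono hsubU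

lemma sens_lower_mem {U : Set (Xset l)} (hO : IsOpen U) (hne : U.Nonempty) :
    ∃ m N : ℕ, ∀ n ≥ N, ∀ ε : ℝ, ε < l (m+n) → n ∈ sensTimes (fmap l hpos hle) U ε := by
  obtain ⟨m, N, hcov⟩ := eventual_cover l hpos hle hO hne
  refine ⟨m, N, fun n hn ε hε => ?_⟩
  simp only [sensTimes, mem_setOf_eq]
  rw [diam_subtype l, val_image_iter l hpos hle]
  calc ENNReal.ofReal ε < ENNReal.ofReal (l (m+n)) := by
        exact (ENNReal.ofReal_lt_ofReal_iff (hpos (m+n))).2 hε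
    _ = EMetric.diam (piece l (m+n)) := (diam_piece l (m+n)).symm
    _ ≤ _ := EMetric.diam_mono (hcov n hn)

end Cascade

open scoped Classical in
/-- index of the gap-block containing `n` (with scale `c`), or 0 -/
noncomputable def gapIdx (c n : ℕ) : ℕ :=
  if h : ∃ j, 1 ≤ j ∧ c * 4^j ≤ n ∧ n < c * 4^j + j then Nat.find h else 0

lemma lt_pow4 (j : ℕ) : j < 4^j := Nat.lt_pow_self (by norm_num)

lemma two_mul_le_pow4 {j : ℕ} (hj : 1 ≤ j) : 2*j ≤ 4^j := by
  induction j with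
  | zero => omega
  | succ j ih =>
    rcases Nat.eq_or_lt_of_le hj with h | h
    · simp [← h]
    · have h1 : 1 ≤ j := by omega
      have := ih h1
      have h4 : 4^j + 4^j ≤ 4^(j+1) := by
        have : 2 * 4^j ≤ 4 * 4^j := by omega
        calc 4^j + 4^j = 2 * 4^j := by ring
          _ ≤ 4 * 4^j := this
          _ = 4^(j+1) := by ring
      have h2 : (2:ℕ) ≤ 4^j := le_trans (by omega) this
      omega

lemma gap_unique {c : ℕ} (hc : 1 ≤ c) {n j j' : ℕ}
    (h : 1 ≤ j ∧ c * 4^j ≤ n ∧ n < c * 4^j + j)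
    (h' : 1 ≤ j' ∧ c * 4^j' ≤ n ∧ n < c * 4^j' + j') : j = j' := by
  by_contra hne
  wlog hlt : j < j' generalizing j j'
  · exact this h' h (Ne.symm hne) (by omega)
  have h4 : 4 * 4^j ≤ 4^j' := by
    calc 4 * 4^j = 4^(j+1) := by ring
    _ ≤ 4^j' := Nat.pow_le_pow_right (by norm_num) (by omega)
  have hj4 := lt_pow4 j
  have : n < c * 4^j + j := h.2.2
  have : c * 4^j' ≤ n := h'.2.1
  nlinarith [h.1, hc]

lemma gapIdx_eq {c : ℕ} (hc : 1 ≤ c) {n j : ℕ}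
    (hj : 1 ≤ j) (h1 : c * 4^j ≤ n) (h2 : n < c * 4^j + j) : gapIdx c n = j := by
  classical
  have hex : ∃ j, 1 ≤ j ∧ c * 4^j ≤ n ∧ n < c * 4^j + j := ⟨j, hj, h1, h2⟩
  rw [gapIdx, dif_pos hex]
  exact gap_unique hc (Nat.find_spec hex) ⟨hj, h1, h2⟩

lemma gapIdx_spec {c n : ℕ} (h : gapIdx c n ≠ 0) :
    1 ≤ gapIdx c n ∧ c * 4^(gapIdx c n) ≤ n ∧ n < c * 4^(gapIdx c n) + gapIdx c n := by
  classical
  by_cases hex : ∃ j, 1 ≤ j ∧ c * 4^j ≤ n ∧ n < c * 4^j + j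
  · rw [gapIdx, dif_pos hex]
    exact Nat.find_spec hex
  · rw [gapIdx, dif_neg hex] at h
    omega

/-- the two gap systems are eventually disjoint under arbitrary shifts -/
lemma gaps_apart (k k' : ℕ) {n : ℕ} (hn : 4*(k+k'+1) ≤ n)
    (hA : gapIdx 1 (k+n) ≠ 0) (hB : gapIdx 2 (k'+n) ≠ 0) : False := by
  obtain ⟨hi1, hi2, hi3⟩ := gapIdx_spec hA
  obtain ⟨hj1, hj2, hj3⟩ := gapIdx_spec hB
  set i := gapIdx 1 (k+n) with hidef
  set j := gapIdx 2 (k'+n) with hjdef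
  have hiP := lt_pow4 i
  have hiP2 := two_mul_le_pow4 hi1
  have hjQ := lt_pow4 j
  have hjQ2 := two_mul_le_pow4 hj1
  rcases lt_trichotomy i j with h | h | h
  · have h4 : 4 * 4^i ≤ 4^j := by
      calc 4 * 4^i = 4^(i+1) := by ring
      _ ≤ 4^j := Nat.pow_le_pow_right (by norm_num) (by omega)
    omega
  · have hpq : (4:ℕ)^i = 4^j := by rw [h]
    omega
  · have h4 : 4 * 4^j ≤ 4^i := by
      calc 4 * 4^j = 4^(j+1) := by ring
      _ ≤ 4^i := Nat.pow_le_pow_right (by norm_num) (by omega)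
    omega

noncomputable def len (c n : ℕ) : ℝ := (2:ℝ)⁻¹ ^ gapIdx c n

lemma len_pos (c n : ℕ) : 0 < len c n := by rw [len]; positivity

lemma len_le_one (c n : ℕ) : len c n ≤ 1 :=
  pow_le_one₀ (by norm_num) (by norm_num)

lemma half_lt_len_iff (c n : ℕ) : 1/2 < len c n ↔ gapIdx c n = 0 := by
  rw [len]
  constructor
  · intro h
    by_contra hne
    have h1 : 1 ≤ gapIdx c n := Nat.one_le_iff_ne_zero.2 hne
    have : ((2:ℝ)⁻¹) ^ gapIdx c n ≤ (2:ℝ)⁻¹ ^ 1 :=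
      pow_le_pow_of_le_one (by norm_num) (by norm_num) h1
    rw [pow_one] at this
    have h2 : ((2:ℝ)⁻¹) = 1/2 := by norm_num
    rw [h2] at this
    linarith
  · intro h; rw [h]; norm_num

lemma len_small (c : ℕ) (hc : 1 ≤ c) {ε : ℝ} (hε : 0 < ε) (N : ℕ) :
    ∃ t, ∀ k < N, len c (t+k) ≤ ε := by
  obtain ⟨j0, hj0⟩ := exists_pow_lt_of_lt_one hε (by norm_num : (2:ℝ)⁻¹ < 1)
  set j := max j0 (max N 1) with hj
  refine ⟨c * 4^j, fun k hk => ?_⟩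
  have hgap : gapIdx c (c * 4^j + k) = j := by
    apply gapIdx_eq hc (by omega) (by omega)
    have : k < j := lt_of_lt_of_le hk (le_trans (le_max_left _ _) (le_max_right _ _))
    omega
  rw [len, hgap]
  calc ((2:ℝ)⁻¹)^j ≤ (2⁻¹)^j0 :=
        pow_le_pow_of_le_one (by norm_num) (by norm_num) (le_max_left _ _)
    _ ≤ ε := hj0.le

section ProdDiam
variable {α β : Type*} [PseudoMetricSpace α] [PseudoMetricSpace β]

lemma diam_le_diam_prod_left (s : Set α) {t : Set β} (ht : t.Nonempty) :
    EMetric.diam s ≤ EMetric.diam (s ×ˢ t) := by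
  obtain ⟨y₀, hy₀⟩ := ht
  have hiso : Isometry (fun a : α => (a, y₀)) := by
    intro a b
    simp [Prod.edist_eq]
  calc EMetric.diam s = EMetric.diam ((fun a : α => (a, y₀)) '' s) :=
        (hiso.ediam_image s).symm
    _ ≤ _ := EMetric.diam_mono (by rintro _ ⟨a, ha, rfl⟩; exact ⟨ha, hy₀⟩)

lemma diam_le_diam_prod_right {s : Set α} (hs : s.Nonempty) (t : Set β) :
    EMetric.diam t ≤ EMetric.diam (s ×ˢ t) := by
  obtain ⟨x₀, hx₀⟩ := hs
  have hiso : Isometry (fun b : β => ((x₀ : α), b)) := by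
    intro a b
    simp [Prod.edist_eq]
  calc EMetric.diam t = EMetric.diam ((fun b : β => (x₀, b)) '' t) :=
        (hiso.ediam_image t).symm
    _ ≤ _ := EMetric.diam_mono (by rintro _ ⟨b, hb, rfl⟩; exact ⟨hx₀, hb⟩)

lemma sensTimes_prod_left {f : α → α} {g : β → β} {U : Set α} {V : Set β} {W : Set (α × β)}
    (hUV : U ×ˢ V ⊆ W) (hV : V.Nonempty) {ε : ℝ} {n : ℕ}
    (h : n ∈ sensTimes f U ε) : n ∈ sensTimes (Prod.map f g) W ε := by
  simp only [sensTimes, mem_setOf_eq] at h ⊢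
  refine lt_of_lt_of_le h ?_
  calc EMetric.diam (f^[n] '' U) ≤ EMetric.diam ((f^[n] '' U) ×ˢ (g^[n] '' V)) :=
        diam_le_diam_prod_left _ (hV.image _)
    _ = EMetric.diam ((Prod.map f g)^[n] '' (U ×ˢ V)) := by
        rw [Set.prod_image_image_eq, Prod.map_iterate]; rfl
    _ ≤ _ := EMetric.diam_mono (image_mono hUV)

lemma sensTimes_prod_right {f : α → α} {g : β → β} {U : Set α} {V : Set β} {W : Set (α × β)}
    (hUV : U ×ˢ V ⊆ W) (hU : U.Nonempty) {ε : ℝ} {n : ℕ}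
    (h : n ∈ sensTimes g V ε) : n ∈ sensTimes (Prod.map f g) W ε := by
  simp only [sensTimes, mem_setOf_eq] at h ⊢
  refine lt_of_lt_of_le h ?_
  calc EMetric.diam (g^[n] '' V) ≤ EMetric.diam ((f^[n] '' U) ×ˢ (g^[n] '' V)) :=
        diam_le_diam_prod_right (hU.image _) _
    _ = EMetric.diam ((Prod.map f g)^[n] '' (U ×ˢ V)) := by
        rw [Set.prod_image_image_eq, Prod.map_iterate]; rfl
    _ ≤ _ := EMetric.diam_mono (image_mono hUV)

end ProdDiam

section PieceOpen
variable (l : ℕ → ℝ) (hpos : ∀ n, 0 < l n) (hle : ∀ n, l n ≤ 1)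

def Upm (m : ℕ) : Set (Xset l) := Subtype.val ⁻¹' (Ioo (3*(m:ℝ) - 1) (3*m + 2))

lemma Upm_open (m : ℕ) : IsOpen (Upm l m) :=
  isOpen_Ioo.preimage continuous_subtype_val

include hpos in
lemma Upm_nonempty (m : ℕ) : (Upm l m).Nonempty := by
  have hmem : (3*(m:ℝ)) ∈ piece l m := ⟨le_rfl, by linarith [hpos m]⟩
  refine ⟨⟨3*m, mem_iUnion.2 ⟨m, hmem⟩⟩, ?_, ?_⟩
  · change 3*(m:ℝ) - 1 < 3*(m:ℝ); linarith
  · change (3*(m:ℝ)) < 3*(m:ℝ) + 2; linarith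

include hle in
lemma Upm_val_subset (m : ℕ) : Subtype.val '' Upm l m ⊆ piece l m := by
  rintro _ ⟨⟨z, hz⟩, hzU, rfl⟩
  obtain ⟨_, ⟨m', rfl⟩, hm'⟩ := hz
  obtain ⟨h1, h2⟩ := hzU
  have hz1 : (3*m':ℝ) ≤ z := hm'.1
  have hz2 : z ≤ 3*m' + 1 := by have := hle m'; linarith [hm'.2]
  have : m' = m := by
    by_contra hne
    rcases lt_or_gt_of_ne hne with h | h
    · have : (m':ℝ) + 1 ≤ m := by exact_mod_cast h
      simp only [mem_preimage] at *
      linarith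
    · have : (m:ℝ) + 1 ≤ m' := by exact_mod_cast h
      linarith
  exact this ▸ hm'

include hpos hle in
lemma not_synd (hsmall : ∀ ε : ℝ, 0 < ε → ∀ N, ∃ t, ∀ k < N, l (t+k) ≤ ε) :
    ¬ SyndeticallySensitive (fmap l hpos hle) := by
  rintro ⟨ε, hε, hall⟩
  obtain ⟨N, hN⟩ := hall (Upm l 0) (Upm_open l 0) (Upm_nonempty l hpos 0)
  obtain ⟨t, ht⟩ := hsmall ε hε N
  obtain ⟨k, hk, hmem⟩ := hN t
  exact sens_upper_notMem l hpos hle (Upm_val_subset l hle 0)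
    (by simpa using ht k hk) hmem

include hpos hle in
lemma len_not_synd (c : ℕ) (hc : 1 ≤ c) (hlen : ∀ n, l n = len c n) :
    ¬ SyndeticallySensitive (fmap l hpos hle) := by
  apply not_synd l hpos hle
  intro ε hε N
  obtain ⟨t, ht⟩ := len_small c hc hε N
  exact ⟨t, fun k hk => (hlen (t+k)) ▸ ht k hk⟩

end PieceOpen

theorem exists_nonSyndeticallySensitive_factors_with_cofinitelySensitive_product :
    ∃ (X Y : Set ℝ), IsClosed X ∧ IsClosed Y ∧
      ∃ (f : X → X) (g : Y → Y), Continuous f ∧ Continuous g ∧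
        ¬ SyndeticallySensitive f ∧ ¬ SyndeticallySensitive g ∧
        CofinitelySensitive (Prod.map f g) := by
  set lA : ℕ → ℝ := len 1 with hlA
  set lB : ℕ → ℝ := len 2 with hlB
  have hApos : ∀ n, 0 < lA n := len_pos 1
  have hAle : ∀ n, lA n ≤ 1 := len_le_one 1
  have hBpos : ∀ n, 0 < lB n := len_pos 2
  have hBle : ∀ n, lB n ≤ 1 := len_le_one 2
  refine ⟨Xset lA, Xset lB, Xset_closed lA hAle, Xset_closed lB hBle,
    fmap lA hApos hAle, fmap lB hBpos hBle,
    fmap_continuous lA hApos hAle, fmap_continuous lB hBpos hBle,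
    len_not_synd lA hApos hAle 1 le_rfl (fun n => rfl),
    len_not_synd lB hBpos hBle 2 (by norm_num) (fun n => rfl), ?_⟩
  refine ⟨1/2, by norm_num, fun W hW hWne => ?_⟩
  obtain ⟨⟨x, y⟩, hxyW⟩ := hWne
  obtain ⟨U, V, hUo, hVo, hxU, hyV, hUVW⟩ := isOpen_prod_iff.1 hW x y hxyW
  obtain ⟨mU, NU, hU⟩ := sens_lower_mem lA hApos hAle hUo ⟨x, hxU⟩
  obtain ⟨mV, NV, hV⟩ := sens_lower_mem lB hBpos hBle hVo ⟨y, hyV⟩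
  apply Set.Finite.subset (Set.finite_Iio (max (max NU NV) (4*(mU+mV+1))))
  intro n hn
  rw [mem_Iio]
  by_contra hge
  push_neg at hge
  have hnU : NU ≤ n := le_trans (le_trans (le_max_left _ _) (le_max_left _ _)) hge
  have hnV : NV ≤ n := le_trans (le_trans (le_max_right _ _) (le_max_left _ _)) hge
  have hgap : ¬(gapIdx 1 (mU+n) ≠ 0 ∧ gapIdx 2 (mV+n) ≠ 0) := by
    intro ⟨h1, h2⟩
    exact gaps_apart mU mV (le_trans (le_max_right _ _) hge) h1 h2
  apply hn
  rcases not_and_or.1 hgap with h | h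
  · push_neg at h
    have hlen : (1:ℝ)/2 < lA (mU+n) := (half_lt_len_iff 1 (mU+n)).2 h
    exact sensTimes_prod_left hUVW ⟨y, hyV⟩ (hU n hnU (1/2) hlen)
  · push_neg at h
    have hlen : (1:ℝ)/2 < lB (mV+n) := (half_lt_len_iff 2 (mV+n)).2 h
    exact sensTimes_prod_right hUVW ⟨x, hxU⟩ (hV n hnV (1/2) hlen)
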